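/- Let ℓ : ℝ → ℝ be twice continuously differentiable and let σ : ℝ → ℝ be twice differentiable. Define f(x; θ) = a₀ + ∑_{j=1}^M a_j σ(⟨w_j, x⟩) + g(x; θ') where g does not depend on (a_j, w_j). Let L(θ) = ∑_{i=1}^n ℓ(-y_i f(x_i; θ)). If θ* is a local minimum of L, then for every j ∈ {1,...,M}: ∑_{i=1}^n ℓ'(-y_i f(x_i;θ*))·y_i·σ'(⟨w_j*, x_i⟩)·x_i = 0 ∈ ℝ^d. -/

import Mathlib

open Filter Set Topology

/-- If `φ` has derivative `ψ t` at every `t`, `ψ` has derivative `c` at `0`, and `φ` has a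
local minimum at `0`, then the second derivative `c` is nonnegative. -/
private lemma second_deriv_nonneg_at_localMin {φ ψ : ℝ → ℝ} {c : ℝ}
    (h1 : ∀ t, HasDerivAt φ (ψ t) t) (h2 : HasDerivAt ψ c 0)
    (hmin : IsLocalMin φ 0) : 0 ≤ c := by
  by_contra hc
  push_neg at hc
  have hψ0 : ψ 0 = 0 := by
    have h := hmin.deriv_eq_zero
    rwa [(h1 0).deriv] at h
  have hslope : Tendsto (slope ψ 0) (𝓝[≠] 0) (𝓝 c) :=
    hasDerivAt_iff_tendsto_slope.mp h2
  have hev : ∀ᶠ t in 𝓝[>] (0 : ℝ), slope ψ 0 t < 0 := by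
    have hle : 𝓝[>] (0 : ℝ) ≤ 𝓝[≠] 0 := nhdsWithin_mono 0 fun t ht => ne_of_gt ht
    exact (hslope.mono_left hle).eventually_lt_const hc
  have hψneg : ∀ᶠ t in 𝓝[>] (0 : ℝ), ψ t < 0 := by
    filter_upwards [hev, self_mem_nhdsWithin] with t hslt ht
    have h0t : (0 : ℝ) < t := ht
    have hst : t⁻¹ * ψ t < 0 := by
      have hsl : slope ψ 0 t = t⁻¹ * ψ t := by simp [slope, hψ0]
      rwa [hsl] at hslt
    have hti : (0 : ℝ) < t⁻¹ := inv_pos.mpr h0t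
    nlinarith
  obtain ⟨δ, hδpos, hδ⟩ : ∃ δ, 0 < δ ∧ ∀ t, t ∈ Set.Ioo (0 : ℝ) δ → ψ t < 0 := by
    rcases mem_nhdsGT_iff_exists_Ioo_subset.mp hψneg with ⟨u, hu, hsub⟩
    exact ⟨u, hu, fun t ht => hsub ht⟩
  have hanti : StrictAntiOn φ (Set.Icc 0 (δ / 2)) := by
    apply strictAntiOn_of_deriv_neg (convex_Icc _ _)
    · exact fun t _ => ((h1 t).continuousAt).continuousWithinAt
    · intro t ht
      rw [interior_Icc] at ht
      rw [(h1 t).deriv]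
      exact hδ t ⟨ht.1, by have := ht.2; linarith⟩
  have hmem : ∀ᶠ t in 𝓝[>] (0 : ℝ), φ 0 ≤ φ t := hmin.filter_mono nhdsWithin_le_nhds
  have hIoo : Set.Ioo (0 : ℝ) (δ / 2) ∈ 𝓝[>] (0 : ℝ) :=
    Ioo_mem_nhdsGT_of_mem ⟨le_refl 0, by linarith⟩
  obtain ⟨t, hφt, ht⟩ := (hmem.and (Filter.eventually_of_mem hIoo fun t ht => ht)).exists
  have hlt : φ t < φ 0 :=
    hanti ⟨le_refl 0, by linarith [ht.2]⟩ ⟨ht.1.le, ht.2.le⟩ ht.1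
  linarith

/-- Derivative of the one-parameter family of losses. -/
private lemma hasDeriv_phi {n : ℕ} (y K q p : Fin n → ℝ) (ℓ σ : ℝ → ℝ)
    (hℓd : Differentiable ℝ ℓ) (hσ1 : Differentiable ℝ σ) (A ε : ℝ) (t : ℝ) :
    HasDerivAt (fun s => ∑ i, ℓ (-(y i) * (K i + (A + ε * s) * σ (q i + s * p i))))
      (∑ i, deriv ℓ (-(y i) * (K i + (A + ε * t) * σ (q i + t * p i))) *
        (-(y i) * (ε * σ (q i + t * p i) + (A + ε * t) * (deriv σ (q i + t * p i) * p i)))) t := by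
  apply HasDerivAt.fun_sum
  intro i _
  have hz : HasDerivAt (fun s : ℝ => q i + s * p i) (p i) t := by
    simpa using ((hasDerivAt_id t).mul_const (p i)).const_add (q i)
  have hσz : HasDerivAt (fun s : ℝ => σ (q i + s * p i)) (deriv σ (q i + t * p i) * p i) t :=
    (hσ1 (q i + t * p i)).hasDerivAt.comp t hz
  have hA : HasDerivAt (fun s : ℝ => A + ε * s) ε t := by
    simpa using ((hasDerivAt_id t).const_mul ε).const_add A
  have hu : HasDerivAt (fun s : ℝ => -(y i) * (K i + (A + ε * s) * σ (q i + s * p i)))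
      (-(y i) * (ε * σ (q i + t * p i) + (A + ε * t) * (deriv σ (q i + t * p i) * p i))) t :=
    ((hA.mul hσz).const_add (K i)).const_mul (-(y i))
  exact (hℓd (-(y i) * (K i + (A + ε * t) * σ (q i + t * p i)))).hasDerivAt.comp t hu

/-- Core analytic lemma: local minimality along all the curves
`t ↦ (A + εt, q + t·(λ p))` forces the weighted gradient to vanish. -/
private lemma core {n : ℕ} (y K q p : Fin n → ℝ) (ℓ σ : ℝ → ℝ)
    (hℓd : Differentiable ℝ ℓ) (hℓ'd : Differentiable ℝ (deriv ℓ))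
    (hσ1 : Differentiable ℝ σ) (hσ2 : Differentiable ℝ (deriv σ)) (A : ℝ)
    (hmin : ∀ ε lam : ℝ, IsLocalMin
      (fun t => ∑ i, ℓ (-(y i) * (K i + (A + ε * t) * σ (q i + t * (lam * p i))))) 0) :
    ∑ i, deriv ℓ (-(y i) * (K i + A * σ (q i))) * y i * deriv σ (q i) * p i = 0 := by
  by_cases hA : A = 0
  · -- hard case : second-order argument
    subst hA
    simp only [zero_mul, add_zero] at *
    have key : ∀ lam : ℝ,
        0 ≤ (∑ i, deriv (deriv ℓ) (-(y i) * K i) * (y i * σ (q i)) * (y i * σ (q i)))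
          - 2 * lam * ∑ i, deriv ℓ (-(y i) * K i) * y i * deriv σ (q i) * p i := by
      intro lam
      have hφ' : ∀ t, HasDerivAt
          (fun s => ∑ i, ℓ (-(y i) * (K i + (0 + 1 * s) * σ (q i + s * (lam * p i)))))
          (∑ i, deriv ℓ (-(y i) * (K i + (0 + 1 * t) * σ (q i + t * (lam * p i)))) *
            (-(y i) * (1 * σ (q i + t * (lam * p i)) +
              (0 + 1 * t) * (deriv σ (q i + t * (lam * p i)) * (lam * p i))))) t :=
        fun t => hasDeriv_phi y K q (fun i => lam * p i) ℓ σ hℓd hσ1 0 1 t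
      -- second derivative at 0
      have hψ' : HasDerivAt
          (fun t : ℝ => ∑ i, deriv ℓ (-(y i) * (K i + (0 + 1 * t) * σ (q i + t * (lam * p i)))) *
            (-(y i) * (1 * σ (q i + t * (lam * p i)) +
              (0 + 1 * t) * (deriv σ (q i + t * (lam * p i)) * (lam * p i)))))
          (∑ i, (deriv (deriv ℓ) (-(y i) * K i) * (y i * σ (q i)) * (y i * σ (q i))
            + deriv ℓ (-(y i) * K i) * (-(y i) * (2 * lam * (deriv σ (q i) * p i))))) 0 := by
        have hterm : ∀ i : Fin n, HasDerivAt
            (fun t : ℝ => deriv ℓ (-(y i) * (K i + (0 + 1 * t) * σ (q i + t * (lam * p i)))) *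
              (-(y i) * (1 * σ (q i + t * (lam * p i)) +
                (0 + 1 * t) * (deriv σ (q i + t * (lam * p i)) * (lam * p i)))))
            (deriv (deriv ℓ) (-(y i) * K i) * (y i * σ (q i)) * (y i * σ (q i))
              + deriv ℓ (-(y i) * K i) * (-(y i) * (2 * lam * (deriv σ (q i) * p i)))) 0 := by
          intro i
          have hz : HasDerivAt (fun s : ℝ => q i + s * (lam * p i)) (lam * p i) 0 := by
            simpa using ((hasDerivAt_id (0:ℝ)).mul_const (lam * p i)).const_add (q i)
          have hA1 : HasDerivAt (fun s : ℝ => (0:ℝ) + 1 * s) 1 0 := by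
            simpa using ((hasDerivAt_id (0:ℝ)).const_mul (1:ℝ)).const_add 0
          have hσz : HasDerivAt (fun s : ℝ => σ (q i + s * (lam * p i)))
              (deriv σ (q i + 0 * (lam * p i)) * (lam * p i)) 0 :=
            (hσ1 (q i + 0 * (lam * p i))).hasDerivAt.comp 0 hz
          have hσ'z : HasDerivAt (fun s : ℝ => deriv σ (q i + s * (lam * p i)))
              (deriv (deriv σ) (q i + 0 * (lam * p i)) * (lam * p i)) 0 :=
            (hσ2 (q i + 0 * (lam * p i))).hasDerivAt.comp (h₂ := deriv σ) 0 hz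
          have hU : HasDerivAt
              (fun s : ℝ => -(y i) * (K i + (0 + 1 * s) * σ (q i + s * (lam * p i))))
              (-(y i) * (1 * σ (q i + 0 * (lam * p i)) +
                (0 + 1 * 0) * (deriv σ (q i + 0 * (lam * p i)) * (lam * p i)))) 0 :=
            ((hA1.mul hσz).const_add (K i)).const_mul (-(y i))
          have hdl : HasDerivAt
              (fun s : ℝ => deriv ℓ (-(y i) * (K i + (0 + 1 * s) * σ (q i + s * (lam * p i)))))
              (deriv (deriv ℓ)
                  (-(y i) * (K i + (0 + 1 * 0) * σ (q i + 0 * (lam * p i)))) *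
                (-(y i) * (1 * σ (q i + 0 * (lam * p i)) +
                  (0 + 1 * 0) * (deriv σ (q i + 0 * (lam * p i)) * (lam * p i))))) 0 :=
            (hℓ'd (-(y i) * (K i + (0 + 1 * 0) * σ (q i + 0 * (lam * p i))))).hasDerivAt.comp (h₂ := deriv ℓ) 0 hU
          have hW : HasDerivAt
              (fun s : ℝ => -(y i) * (1 * σ (q i + s * (lam * p i)) +
                (0 + 1 * s) * (deriv σ (q i + s * (lam * p i)) * (lam * p i))))
              (-(y i) * (1 * (deriv σ (q i + 0 * (lam * p i)) * (lam * p i)) +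
                (1 * (deriv σ (q i + 0 * (lam * p i)) * (lam * p i)) +
                  (0 + 1 * 0) * (deriv (deriv σ) (q i + 0 * (lam * p i)) * (lam * p i) * (lam * p i))))) 0 :=
            ((((hσz.const_mul (1:ℝ))).add (hA1.mul (hσ'z.mul_const (lam * p i)))).const_mul (-(y i)))
          have := hdl.mul hW
          refine this.congr_deriv ?_
          simp only [zero_add, one_mul, mul_zero, add_zero, zero_mul, mul_one]
          ring
        exact HasDerivAt.fun_sum (fun i _ => hterm i)
      have hge := second_deriv_nonneg_at_localMin hφ' hψ' (hmin 1 lam)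
      calc (0:ℝ) ≤ _ := hge
        _ = _ := by
          rw [Finset.mul_sum, ← Finset.sum_sub_distrib]
          exact Finset.sum_congr rfl fun i _ => by ring
    by_contra hBne
    set B := ∑ i, deriv ℓ (-(y i) * K i) * y i * deriv σ (q i) * p i with hBdef
    set C := ∑ i, deriv (deriv ℓ) (-(y i) * K i) * (y i * σ (q i)) * (y i * σ (q i)) with hCdef
    have h := key ((C + 1) / (2 * B))
    have h2B : 2 * ((C + 1) / (2 * B)) * B = C + 1 := by
      field_simp
    rw [h2B] at h
    linarith
  · -- easy case : first-order argument
    have h1 := hasDeriv_phi y K q (fun i => 1 * p i) ℓ σ hℓd hσ1 A 0 0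
    have h0 := (hmin 0 1).deriv_eq_zero
    rw [h1.deriv] at h0
    simp only [mul_zero, zero_mul, add_zero, zero_add, one_mul] at h0
    have hfact : ∑ i, deriv ℓ (-(y i) * (K i + A * σ (q i)))
          * (-(y i) * (A * (deriv σ (q i) * p i)))
        = -A * ∑ i, deriv ℓ (-(y i) * (K i + A * σ (q i))) * y i * deriv σ (q i) * p i := by
      rw [Finset.mul_sum]
      exact Finset.sum_congr rfl fun i _ => by ring
    rw [hfact] at h0
    rcases mul_eq_zero.mp h0 with h | h
    · exact absurd (neg_eq_zero.mp h) hA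
    · exact h

/-- Lemma 1 (necessary condition at a local minimum): at any local minimum of the
empirical loss, for each hidden unit `j` the weighted gradient condition
`∑ᵢ ℓ'(-yᵢ f(xᵢ;θ*)) yᵢ σ'(⟨wⱼ*, xᵢ⟩) xᵢ = 0` holds. -/
theorem local_min_necessary_condition
    (d n M : ℕ)
    (x : Fin n → Fin d → ℝ) (y : Fin n → ℝ)
    (ℓ : ℝ → ℝ) (hℓ : ContDiff ℝ 2 ℓ)
    (σ : ℝ → ℝ) (hσ1 : Differentiable ℝ σ) (hσ2 : Differentiable ℝ (deriv σ))
    (g : (Fin d → ℝ) → ℝ)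
    (a0 : ℝ) (a : Fin M → ℝ) (w : Fin M → Fin d → ℝ)
    (hmin : IsLocalMin
      (fun θ : ℝ × (Fin M → ℝ) × (Fin M → Fin d → ℝ) =>
        ∑ i, ℓ (-(y i) * (θ.1 + (∑ j, θ.2.1 j * σ (∑ k, θ.2.2 j k * x i k)) + g (x i))))
      (a0, a, w)) :
    ∀ j, ∑ i,
      (deriv ℓ (-(y i) * (a0 + (∑ j', a j' * σ (∑ k, w j' k * x i k)) + g (x i)))
        * y i * deriv σ (∑ k, w j k * x i k)) • x i = (0 : Fin d → ℝ) := by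
  have hℓd : Differentiable ℝ ℓ := hℓ.differentiable two_ne_zero
  have hℓ'd : Differentiable ℝ (deriv ℓ) := by
    have h2 : ContDiff ℝ ((1 : WithTop ℕ∞) + 1) ℓ := by
      have : ((1 : WithTop ℕ∞) + 1) = 2 := by norm_num
      rw [this]; exact hℓ
    exact ((contDiff_succ_iff_deriv.mp h2).2.2).differentiable one_ne_zero
  intro j
  funext k
  have hsplit : ∀ i, (∑ j', a j' * σ (∑ k', w j' k' * x i k'))
      = a j * σ (∑ k', w j k' * x i k')
        + ∑ j' ∈ Finset.univ.erase j, a j' * σ (∑ k', w j' k' * x i k') :=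
    fun i => (Finset.add_sum_erase _ _ (Finset.mem_univ j)).symm
  have hmin' : ∀ ε lam : ℝ, IsLocalMin
      (fun t => ∑ i, ℓ (-(y i) *
        ((a0 + (∑ j' ∈ Finset.univ.erase j, a j' * σ (∑ k', w j' k' * x i k')) + g (x i))
          + (a j + ε * t) * σ ((∑ k', w j k' * x i k') + t * (lam * x i k))))) 0 := by
    intro ε lam
    set γ : ℝ → ℝ × (Fin M → ℝ) × (Fin M → Fin d → ℝ) := fun t =>
      (a0, fun j' => if j' = j then a j + ε * t else a j',
        fun j' k' => if j' = j then w j k' + t * (if k' = k then lam else 0) else w j' k')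
      with hγ
    have hγ0 : γ 0 = (a0, a, w) := by
      refine Prod.ext rfl (Prod.ext ?_ ?_)
      · funext j'
        simp only [hγ]
        by_cases h : j' = j <;> simp [h]
      · funext j' k'
        simp only [hγ]
        by_cases h : j' = j <;> simp [h]
    have hcont : ContinuousAt γ 0 := by
      refine Continuous.continuousAt ?_
      refine continuous_const.prodMk (Continuous.prodMk ?_ ?_)
      · refine continuous_pi fun j' => ?_
        by_cases h : j' = j <;> simp only [h, if_true, if_false] <;> fun_prop
      · refine continuous_pi fun j' => continuous_pi fun k' => ?_
        by_cases h : j' = j <;> simp only [h, if_true, if_false] <;> fun_prop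
    have hcomp : IsLocalMin
        ((fun θ : ℝ × (Fin M → ℝ) × (Fin M → Fin d → ℝ) =>
          ∑ i, ℓ (-(y i) * (θ.1 + (∑ j, θ.2.1 j * σ (∑ k, θ.2.2 j k * x i k)) + g (x i)))) ∘ γ)
        0 := (hγ0 ▸ hmin).comp_continuous hcont
    have e2 : ∀ (t : ℝ) i, ∑ k', (w j k' + t * (if k' = k then lam else 0)) * x i k'
        = (∑ k', w j k' * x i k') + t * (lam * x i k) := by
      intro t i
      have hpt : ∀ k', (w j k' + t * (if k' = k then lam else 0)) * x i k'
          = w j k' * x i k' + (if k' = k then t * lam * x i k' else 0) := by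
        intro k'; split_ifs <;> ring
      rw [Finset.sum_congr rfl fun k' _ => hpt k', Finset.sum_add_distrib,
        Finset.sum_ite_eq' Finset.univ k (fun k' => t * lam * x i k')]
      simp [mul_assoc]
    have e1 : ∀ (t : ℝ) i,
        (∑ j', (if j' = j then a j + ε * t else a j') *
          σ (∑ k', (if j' = j then w j k' + t * (if k' = k then lam else 0) else w j' k') * x i k'))
        = (a j + ε * t) * σ ((∑ k', w j k' * x i k') + t * (lam * x i k))
          + ∑ j' ∈ Finset.univ.erase j, a j' * σ (∑ k', w j' k' * x i k') := by
      intro t i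
      rw [← Finset.add_sum_erase _ _ (Finset.mem_univ j)]
      congr 1
      · simp only [eq_self_iff_true, if_true]
        rw [e2 t i]
      · refine Finset.sum_congr rfl fun j' hj' => ?_
        have hne : j' ≠ j := (Finset.mem_erase.mp hj').1
        simp [hne]
    have heq : ((fun θ : ℝ × (Fin M → ℝ) × (Fin M → Fin d → ℝ) =>
          ∑ i, ℓ (-(y i) * (θ.1 + (∑ j, θ.2.1 j * σ (∑ k, θ.2.2 j k * x i k)) + g (x i)))) ∘ γ)
        = fun t => ∑ i, ℓ (-(y i) *
          ((a0 + (∑ j' ∈ Finset.univ.erase j, a j' * σ (∑ k', w j' k' * x i k')) + g (x i))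
            + (a j + ε * t) * σ ((∑ k', w j k' * x i k') + t * (lam * x i k)))) := by
      funext t
      simp only [Function.comp_apply, hγ]
      refine Finset.sum_congr rfl fun i _ => ?_
      congr 1
      rw [e1 t i]
      ring
    rw [heq] at hcomp
    exact hcomp
  have hcore := core y
    (fun i => a0 + (∑ j' ∈ Finset.univ.erase j, a j' * σ (∑ k', w j' k' * x i k')) + g (x i))
    (fun i => ∑ k', w j k' * x i k') (fun i => x i k) ℓ σ hℓd hℓ'd hσ1 hσ2 (a j) hmin'
  have hcore' : ∑ i, deriv ℓ (-(y i) *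
        ((a0 + (∑ j' ∈ Finset.univ.erase j, a j' * σ (∑ k', w j' k' * x i k')) + g (x i))
          + a j * σ (∑ k', w j k' * x i k')))
      * y i * deriv σ (∑ k', w j k' * x i k') * x i k = 0 := hcore
  have hgoal : (∑ i,
      (deriv ℓ (-(y i) * (a0 + (∑ j', a j' * σ (∑ k, w j' k * x i k)) + g (x i)))
        * y i * deriv σ (∑ k, w j k * x i k)) • x i) k
      = ∑ i, (deriv ℓ (-(y i) * (a0 + (∑ j', a j' * σ (∑ k, w j' k * x i k)) + g (x i)))
        * y i * deriv σ (∑ k, w j k * x i k)) * x i k := by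
    simp [Finset.sum_apply]
  rw [hgoal]
  refine Eq.trans ?_ hcore'
  refine Finset.sum_congr rfl fun i _ => ?_
  have harg : -(y i) * (a0 + (∑ j', a j' * σ (∑ k', w j' k' * x i k')) + g (x i))
      = -(y i) * ((a0 + (∑ j' ∈ Finset.univ.erase j, a j' * σ (∑ k', w j' k' * x i k')) + g (x i))
        + a j * σ (∑ k', w j k' * x i k')) := by
    rw [hsplit i]; ring
  rw [harg]
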